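/- arXiv:2204.08273 — 8 statements merged into one kernel-verified Lean document; each statement's English description precedes it below -/
import Mathlib

section
/- Q = H M, i.e., the block matrix Q factors as the product of H and M. -/
open Matrix

theorem stmt0
    {α β ℓ : Type*} [Fintype α] [Fintype β] [Fintype ℓ]
    [DecidableEq α] [DecidableEq β] [DecidableEq ℓ]
    (ρ g : ℝ) (hρ : 0 < ρ) (hg : g ∈ Set.Ioo (0:ℝ) 2)
    (G₁ : Matrix α α ℝ) (hG₁ : G₁.IsSymm)
    (Pm : Matrix β β ℝ) (hPm : Pm.IsSymm)
    (A : Matrix ℓ β ℝ) :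
    (Matrix.fromBlocks G₁ 0 0
        (Matrix.fromBlocks (ρ • (Aᵀ * A) + Pm) ((1 - g) • Aᵀ)
          (-A) ((1 / ρ) • (1 : Matrix ℓ ℓ ℝ))) :
      Matrix (α ⊕ (β ⊕ ℓ)) (α ⊕ (β ⊕ ℓ)) ℝ) =
    (Matrix.fromBlocks G₁ 0 0
        (Matrix.fromBlocks (Pm + (ρ / g) • (Aᵀ * A)) (((1 - g) / g) • Aᵀ)
          (((1 - g) / g) • A) ((1 / (g * ρ)) • (1 : Matrix ℓ ℓ ℝ)))) *
    (Matrix.fromBlocks 1 0 0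
        (Matrix.fromBlocks (1 : Matrix β β ℝ) 0
          (-(ρ • A)) (g • (1 : Matrix ℓ ℓ ℝ)))) := by
  obtain ⟨hg0, hg2⟩ := hg
  have hgne : g ≠ 0 := ne_of_gt hg0
  have hρne : ρ ≠ 0 := ne_of_gt hρ
  rw [Matrix.fromBlocks_multiply, Matrix.fromBlocks_multiply]
  simp only [Matrix.mul_one, Matrix.one_mul, Matrix.mul_zero, Matrix.zero_mul,
    Matrix.mul_neg, Matrix.neg_mul, Matrix.smul_mul, Matrix.mul_smul,
    Matrix.add_mul, Matrix.mul_add, add_zero, zero_add, smul_smul, neg_neg]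
  ext i j
  rcases i with i | i | i <;> rcases j with j | j | j <;>
      simp only [Matrix.fromBlocks_apply₁₁, Matrix.fromBlocks_apply₁₂,
        Matrix.fromBlocks_apply₂₁, Matrix.fromBlocks_apply₂₂,
        Matrix.add_apply, Matrix.smul_apply, Matrix.neg_apply,
        Matrix.zero_apply, smul_eq_mul] <;>
    first
      | rfl
      | (field_simp; ring)
      | field_simp
end

section
/- The matrix N := Qᵀ + Q − MᵀHM equals the block diagonal matrix diag(G₁, P_m, ((2−γ)/ρ) I_ℓ). -/
open Matrix

theorem stmt2
    {α β ℓ : Type*} [Fintype α] [Fintype β] [Fintype ℓ]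
    [DecidableEq α] [DecidableEq β] [DecidableEq ℓ]
    (ρ g : ℝ) (hρ : 0 < ρ) (hg : g ∈ Set.Ioo (0:ℝ) 2)
    (G₁ : Matrix α α ℝ) (hG₁ : G₁.IsSymm)
    (Pm : Matrix β β ℝ) (hPm : Pm.IsSymm)
    (A : Matrix ℓ β ℝ) :
    letI Q : Matrix (α ⊕ (β ⊕ ℓ)) (α ⊕ (β ⊕ ℓ)) ℝ :=
      Matrix.fromBlocks G₁ 0 0
        (Matrix.fromBlocks (ρ • (Aᵀ * A) + Pm) ((1 - g) • Aᵀ)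
          (-A) ((1 / ρ) • (1 : Matrix ℓ ℓ ℝ)))
    letI M : Matrix (α ⊕ (β ⊕ ℓ)) (α ⊕ (β ⊕ ℓ)) ℝ :=
      Matrix.fromBlocks 1 0 0
        (Matrix.fromBlocks (1 : Matrix β β ℝ) 0
          (-(ρ • A)) (g • (1 : Matrix ℓ ℓ ℝ)))
    letI H : Matrix (α ⊕ (β ⊕ ℓ)) (α ⊕ (β ⊕ ℓ)) ℝ :=
      Matrix.fromBlocks G₁ 0 0
        (Matrix.fromBlocks (Pm + (ρ / g) • (Aᵀ * A)) (((1 - g) / g) • Aᵀ)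
          (((1 - g) / g) • A) ((1 / (g * ρ)) • (1 : Matrix ℓ ℓ ℝ)))
    Qᵀ + Q - Mᵀ * H * M =
      Matrix.fromBlocks G₁ 0 0
        (Matrix.fromBlocks Pm 0 0 (((2 - g) / ρ) • (1 : Matrix ℓ ℓ ℝ))) := by
  have hg0 : g ≠ 0 := ne_of_gt hg.1
  have hρ0 : ρ ≠ 0 := ne_of_gt hρ
  rw [sub_eq_iff_eq_add]
  simp only [fromBlocks_transpose, fromBlocks_multiply, fromBlocks_add,
    transpose_add, transpose_smul, transpose_mul, transpose_transpose,
    transpose_neg, transpose_one, transpose_zero, hG₁.eq, hPm.eq,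
    Matrix.smul_mul, Matrix.mul_smul, Matrix.mul_one, Matrix.one_mul,
    Matrix.mul_zero, Matrix.zero_mul, Matrix.mul_neg, Matrix.neg_mul,
    Matrix.mul_assoc, smul_smul, neg_smul, smul_neg, neg_neg,
    add_zero, zero_add, smul_zero, neg_zero]
  rw [Matrix.fromBlocks_inj, Matrix.fromBlocks_inj]
  refine ⟨?_, rfl, rfl, ?_, ?_, ?_, ?_⟩
  · module
  · simp only [Matrix.add_mul, Matrix.neg_mul, Matrix.smul_mul, smul_smul,
      Matrix.mul_smul, ← Matrix.mul_assoc]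
    match_scalars <;> field_simp <;> ring
  · match_scalars <;> field_simp <;> ring
  · match_scalars <;> field_simp <;> ring
  · match_scalars <;> field_simp <;> ring
end

section
/- If G₁ and P_m are positive definite and γ ∈ (0,2), ρ > 0, then the matrix N = Qᵀ + Q − MᵀHM is positive definite. -/
open Matrix

theorem fromBlocks_posDef_aux {m n : Type*} [Fintype m] [Fintype n]
    {A : Matrix m m ℝ} {D : Matrix n n ℝ} (hA : A.PosDef) (hD : D.PosDef) :
    (Matrix.fromBlocks A 0 0 D).PosDef := by
  refine Matrix.PosDef.of_dotProduct_mulVec_pos (Matrix.isHermitian_fromBlocks_iff.2 ⟨hA.1, by simp, by simp, hD.1⟩) (fun x hx => ?_)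
  rw [fromBlocks_mulVec, dotProduct_block]
  simp only [Sum.elim_comp_inl, Sum.elim_comp_inr, Matrix.zero_mulVec, add_zero, zero_add,
    Pi.star_apply]
  rcases (by
    by_contra h
    push_neg at h
    apply hx
    funext i; cases i
    · exact congrFun h.1 _
    · exact congrFun h.2 _ : x ∘ Sum.inl ≠ 0 ∨ x ∘ Sum.inr ≠ 0) with h | h
  · have := hA.dotProduct_mulVec_pos h
    have := hD.posSemidef.dotProduct_mulVec_nonneg (x ∘ Sum.inr)
    positivity
  · have := hD.dotProduct_mulVec_pos h
    have := hA.posSemidef.dotProduct_mulVec_nonneg (x ∘ Sum.inl)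
    positivity

theorem smul_one_posDef_aux {n : Type*} [Fintype n] [DecidableEq n] {c : ℝ} (hc : 0 < c) :
    (c • (1 : Matrix n n ℝ)).PosDef := by
  refine Matrix.PosDef.of_dotProduct_mulVec_pos (by simp [Matrix.IsHermitian]) (fun x hx => ?_)
  rw [Matrix.smul_mulVec, Matrix.one_mulVec, dotProduct_smul, smul_eq_mul]
  have hx' : 0 < star x ⬝ᵥ x := dotProduct_star_self_pos_iff.2 hx
  positivity

theorem stmt3
    {α β ℓ : Type*} [Fintype α] [Fintype β] [Fintype ℓ]
    [DecidableEq α] [DecidableEq β] [DecidableEq ℓ]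
    (ρ g : ℝ) (hρ : 0 < ρ) (hg : g ∈ Set.Ioo (0:ℝ) 2)
    (G₁ : Matrix α α ℝ) (hG₁ : G₁.PosDef)
    (Pm : Matrix β β ℝ) (hPm : Pm.PosDef)
    (A : Matrix ℓ β ℝ) :
    letI Q : Matrix (α ⊕ (β ⊕ ℓ)) (α ⊕ (β ⊕ ℓ)) ℝ :=
      Matrix.fromBlocks G₁ 0 0
        (Matrix.fromBlocks (ρ • (Aᵀ * A) + Pm) ((1 - g) • Aᵀ)
          (-A) ((1 / ρ) • (1 : Matrix ℓ ℓ ℝ)))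
    letI M : Matrix (α ⊕ (β ⊕ ℓ)) (α ⊕ (β ⊕ ℓ)) ℝ :=
      Matrix.fromBlocks 1 0 0
        (Matrix.fromBlocks (1 : Matrix β β ℝ) 0
          (-(ρ • A)) (g • (1 : Matrix ℓ ℓ ℝ)))
    letI H : Matrix (α ⊕ (β ⊕ ℓ)) (α ⊕ (β ⊕ ℓ)) ℝ :=
      Matrix.fromBlocks G₁ 0 0
        (Matrix.fromBlocks (Pm + (ρ / g) • (Aᵀ * A)) (((1 - g) / g) • Aᵀ)
          (((1 - g) / g) • A) ((1 / (g * ρ)) • (1 : Matrix ℓ ℓ ℝ)))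
    (Qᵀ + Q - Mᵀ * H * M).PosDef := by
  have hg0 : g ≠ 0 := ne_of_gt hg.1
  have hρ0 : ρ ≠ 0 := ne_of_gt hρ
  have hGt : G₁ᵀ = G₁ := by
    rw [← Matrix.conjTranspose_eq_transpose_of_trivial]; exact hG₁.1.eq
  have hPt : Pmᵀ = Pm := by
    rw [← Matrix.conjTranspose_eq_transpose_of_trivial]; exact hPm.1.eq
  have key : ((Matrix.fromBlocks G₁ 0 0
        (Matrix.fromBlocks (ρ • (Aᵀ * A) + Pm) ((1 - g) • Aᵀ)
          (-A) ((1 / ρ) • (1 : Matrix ℓ ℓ ℝ))))ᵀ +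
       (Matrix.fromBlocks G₁ 0 0
          (Matrix.fromBlocks (ρ • (Aᵀ * A) + Pm) ((1 - g) • Aᵀ)
            (-A) ((1 / ρ) • (1 : Matrix ℓ ℓ ℝ)))) -
       (Matrix.fromBlocks 1 0 0
          (Matrix.fromBlocks (1 : Matrix β β ℝ) 0
            (-(ρ • A)) (g • (1 : Matrix ℓ ℓ ℝ))))ᵀ *
       (Matrix.fromBlocks G₁ 0 0
          (Matrix.fromBlocks (Pm + (ρ / g) • (Aᵀ * A)) (((1 - g) / g) • Aᵀ)
            (((1 - g) / g) • A) ((1 / (g * ρ)) • (1 : Matrix ℓ ℓ ℝ)))) *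
       (Matrix.fromBlocks 1 0 0
          (Matrix.fromBlocks (1 : Matrix β β ℝ) 0
            (-(ρ • A)) (g • (1 : Matrix ℓ ℓ ℝ))))) =
      Matrix.fromBlocks G₁ 0 0
        (Matrix.fromBlocks Pm 0 0 (((2 - g) / ρ) • (1 : Matrix ℓ ℓ ℝ))) := by
    rw [sub_eq_iff_eq_add]
    simp only [Matrix.fromBlocks_transpose, Matrix.fromBlocks_multiply, Matrix.fromBlocks_add,
      Matrix.transpose_add, Matrix.transpose_smul, Matrix.transpose_mul,
      Matrix.transpose_transpose, Matrix.transpose_neg, Matrix.transpose_one,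
      Matrix.transpose_zero, Matrix.zero_mul, Matrix.mul_zero, add_zero, zero_add,
      Matrix.one_mul, Matrix.mul_one, hGt, hPt]
    rw [Matrix.fromBlocks_inj]
    refine ⟨rfl, rfl, rfl, ?_⟩
    rw [Matrix.fromBlocks_inj]
    refine ⟨?_, ?_, ?_, ?_⟩ <;>
      · simp only [Matrix.mul_smul, Matrix.smul_mul, Matrix.mul_one, Matrix.one_mul,
          Matrix.neg_mul, Matrix.mul_neg, neg_neg, Matrix.add_mul, Matrix.mul_add,
          Matrix.zero_mul, Matrix.mul_zero, add_zero, zero_add, smul_smul, smul_neg, neg_smul]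
        match_scalars <;> field_simp <;> ring
  rw [key]
  exact fromBlocks_posDef_aux hG₁
    (fromBlocks_posDef_aux hPm
      (smul_one_posDef_aux (div_pos (by linarith [hg.2]) hρ)))
end

section
/- Let F: ℝⁿ → ℝⁿ be a monotone map and θ: ℝⁿ → ℝ convex. If w̄, w̃ ∈ W and Q is a matrix such that θ(u) − θ(ū) + (w − w̄)ᵀF(w̄) ≥ (w − w̄)ᵀQ(v − w̄) holds for all w ∈ W with data (ū, w̄, v) = (ū, w̄, wᵏ) and also with the shifted data (ũ, w̃, wᵏ⁺¹), then (w̄ − w̃)ᵀ Q [(wᵏ − wᵏ⁺¹) − (w̄ − w̃)] ≥ 0. -/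
open Matrix

theorem stmt8
    {n : Type*} [Fintype n] [DecidableEq n]
    (W : Set (n → ℝ)) (hW : Convex ℝ W)
    (F : (n → ℝ) → (n → ℝ))
    (hF : ∀ w₁ ∈ W, ∀ w₂ ∈ W, 0 ≤ (w₁ - w₂) ⬝ᵥ (F w₁ - F w₂))
    (θ : (n → ℝ) → ℝ) (hθ : ConvexOn ℝ W θ)
    (Q : Matrix n n ℝ)
    (wb wt wk wk1 : n → ℝ) (hwb : wb ∈ W) (hwt : wt ∈ W)
    (h1 : ∀ w ∈ W, θ w - θ wb + (w - wb) ⬝ᵥ F wb ≥ (w - wb) ⬝ᵥ Q.mulVec (wk - wb))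
    (h2 : ∀ w ∈ W, θ w - θ wt + (w - wt) ⬝ᵥ F wt ≥ (w - wt) ⬝ᵥ Q.mulVec (wk1 - wt)) :
    (wb - wt) ⬝ᵥ Q.mulVec ((wk - wk1) - (wb - wt)) ≥ 0 := by
  have ha := h1 wt hwt
  have hb := h2 wb hwb
  have hm := hF wb hwb wt hwt
  have key : (wk - wk1) - (wb - wt) = (wk - wb) - (wk1 - wt) := by ring
  rw [key, Matrix.mulVec_sub, dotProduct_sub]
  have e1 : (wt - wb) ⬝ᵥ Q.mulVec (wk - wb) = -((wb - wt) ⬝ᵥ Q.mulVec (wk - wb)) := by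
    rw [← neg_dotProduct]; congr 1; ring
  have e2 : (wt - wb) ⬝ᵥ F wb = -((wb - wt) ⬝ᵥ F wb) := by
    rw [← neg_dotProduct]; congr 1; ring
  have e3 : (wb - wt) ⬝ᵥ (F wb - F wt) = (wb - wt) ⬝ᵥ F wb - (wb - wt) ⬝ᵥ F wt := by
    rw [dotProduct_sub]
  rw [e1, e2] at ha
  rw [e3] at hm
  linarith
end

section
/- If (w − w̄ᵏ)ᵀ Q [(wᵏ − wᵏ⁺¹) − (w̄ᵏ − w̄ᵏ⁺¹)] ≥ 0 with w := w̄ᵏ⁺¹ replaced appropriately, then adding the quadratic identity gives (wᵏ − wᵏ⁺¹)ᵀ Q [(wᵏ − wᵏ⁺¹) − (w̄ᵏ − w̄ᵏ⁺¹)] ≥ ½‖(wᵏ − w̄ᵏ) − (wᵏ⁺¹ − w̄ᵏ⁺¹)‖²_{Qᵀ+Q}. -/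
open Matrix

theorem stmt9
    {n : Type*} [Fintype n] [DecidableEq n]
    (Q : Matrix n n ℝ)
    (wk wk1 wbk wbk1 : n → ℝ)
    (h : (wbk - wbk1) ⬝ᵥ Q.mulVec ((wk - wk1) - (wbk - wbk1)) ≥ 0) :
    (wk - wk1) ⬝ᵥ Q.mulVec ((wk - wk1) - (wbk - wbk1)) ≥
      (1 / 2) * (((wk - wbk) - (wk1 - wbk1)) ⬝ᵥ
        (Qᵀ + Q).mulVec ((wk - wbk) - (wk1 - wbk1))) := by
  have hd : (wk - wbk) - (wk1 - wbk1) = (wk - wk1) - (wbk - wbk1) := by abel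
  rw [hd]
  generalize (wk - wk1) = a at *
  generalize (wbk - wbk1) = b at *
  have ht : (a - b) ⬝ᵥ Qᵀ.mulVec (a - b) = (a - b) ⬝ᵥ Q.mulVec (a - b) := by
    rw [dotProduct_mulVec, vecMul_transpose, dotProduct_comm]
  rw [add_mulVec, dotProduct_add, ht]
  have hsplit : a ⬝ᵥ Q.mulVec (a - b) = (a - b) ⬝ᵥ Q.mulVec (a - b) + b ⬝ᵥ Q.mulVec (a - b) := by
    rw [sub_dotProduct]; ring
  rw [hsplit]
  linarith
end

section
/- Suppose Q = HM with H symmetric positive definite, wᵏ − wᵏ⁺¹ = M(wᵏ − w̄ᵏ), wᵏ⁺¹ − wᵏ⁺² = M(wᵏ⁺¹ − w̄ᵏ⁺¹), and aᵀ MᵀHM (a − b) ≥ ½‖a − b‖²_{Qᵀ+Q} where a = wᵏ − w̄ᵏ, b = wᵏ⁺¹ − w̄ᵏ⁺¹. If additionally N := Qᵀ + Q − MᵀHM is positive semidefinite, then ‖wᵏ⁺¹ − wᵏ⁺²‖²_H ≤ ‖wᵏ − wᵏ⁺¹‖²_H. -/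
open Matrix

lemma stmt10_aux_sym {n : Type*} [Fintype n] (G : Matrix n n ℝ) (hGsymm : Gᵀ = G)
    (x y : n → ℝ) : x ⬝ᵥ G.mulVec y = y ⬝ᵥ G.mulVec x := by
  rw [Matrix.dotProduct_mulVec, ← hGsymm, Matrix.vecMul_transpose, dotProduct_comm, hGsymm]

lemma stmt10_aux_expand {n : Type*} [Fintype n] (G : Matrix n n ℝ) (hGsymm : Gᵀ = G)
    (a d : n → ℝ) : (a - d) ⬝ᵥ G.mulVec (a - d) =
      a ⬝ᵥ G.mulVec a - 2 * (a ⬝ᵥ G.mulVec d) + d ⬝ᵥ G.mulVec d := by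
  rw [Matrix.mulVec_sub, sub_dotProduct, dotProduct_sub, dotProduct_sub,
    stmt10_aux_sym G hGsymm d a]
  ring

theorem stmt10
    {n : Type*} [Fintype n] [DecidableEq n]
    (H M Q : Matrix n n ℝ) (hH : H.PosDef) (hQ : Q = H * M)
    (wk wk1 wk2 wbk wbk1 : n → ℝ)
    (h1 : wk - wk1 = M.mulVec (wk - wbk))
    (h2 : wk1 - wk2 = M.mulVec (wk1 - wbk1))
    (h3 : (wk - wbk) ⬝ᵥ (Mᵀ * H * M).mulVec ((wk - wbk) - (wk1 - wbk1)) ≥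
      (1 / 2) * (((wk - wbk) - (wk1 - wbk1)) ⬝ᵥ
        (Qᵀ + Q).mulVec ((wk - wbk) - (wk1 - wbk1))))
    (hN : (Qᵀ + Q - Mᵀ * H * M).PosSemidef) :
    (wk1 - wk2) ⬝ᵥ H.mulVec (wk1 - wk2) ≤ (wk - wk1) ⬝ᵥ H.mulVec (wk - wk1) := by
  have hHt : Hᵀ = H := by simpa using hH.1.eq
  set a := wk - wbk with ha
  set b := wk1 - wbk1 with hb
  set d := a - b with hd
  set G := Mᵀ * H * M with hG
  rw [h1, h2]
  have key : ∀ x : n → ℝ, (M.mulVec x) ⬝ᵥ H.mulVec (M.mulVec x) = x ⬝ᵥ G.mulVec x := by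
    intro x
    rw [hG, ← Matrix.mulVec_mulVec, ← Matrix.mulVec_mulVec,
      Matrix.dotProduct_mulVec x, Matrix.vecMul_transpose]
  rw [key, key]
  have hNd : 0 ≤ d ⬝ᵥ (Qᵀ + Q - G).mulVec d := by
    have := hN.dotProduct_mulVec_nonneg d
    simpa using this
  have hGsymm : Gᵀ = G := by
    rw [hG]
    simp [Matrix.transpose_mul, hHt, Matrix.mul_assoc]
  have hb' : b = a - d := by rw [hd]; abel
  have expand : b ⬝ᵥ G.mulVec b =
      a ⬝ᵥ G.mulVec a - 2 * (a ⬝ᵥ G.mulVec d) + d ⬝ᵥ G.mulVec d :=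
    hb' ▸ stmt10_aux_expand G hGsymm a d
  have hNd' : d ⬝ᵥ (Qᵀ + Q - G).mulVec d =
      d ⬝ᵥ (Qᵀ + Q).mulVec d - d ⬝ᵥ G.mulVec d := by
    rw [Matrix.sub_mulVec, dotProduct_sub]
  rw [expand]
  linarith [h3, hNd' ▸ hNd]
end

section
/- Let θ be a convex function on ℝⁿ and F monotone affine-free map on a convex set W. Suppose for each k: θ(u) − θ(ūᵏ) + (w − w̄ᵏ)ᵀF(w) ≥ ½(‖wᵏ⁺¹ − w‖²_H − ‖wᵏ − w‖²_H) for all w ∈ W. Then for w_t := (1/(t+1)) Σ_{k=0}^{t} w̄ᵏ, one has θ(u_t) − θ(u) + (w_t − w)ᵀF(w) ≤ ‖w − w⁰‖²_H / (2(t+1)) for all w ∈ W. -/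
open Matrix

theorem stmt14
    {n : Type*} [Fintype n] [DecidableEq n]
    (W : Set (n → ℝ)) (hW : Convex ℝ W)
    (θ : (n → ℝ) → ℝ) (hθ : ConvexOn ℝ W θ)
    (F : (n → ℝ) → (n → ℝ))
    (hF : ∀ w₁ ∈ W, ∀ w₂ ∈ W, 0 ≤ (w₁ - w₂) ⬝ᵥ (F w₁ - F w₂))
    (H : Matrix n n ℝ) (hH : H.PosSemidef)
    (wk : ℕ → (n → ℝ)) (wb : ℕ → (n → ℝ)) (hwb : ∀ k, wb k ∈ W)
    (hkey : ∀ k, ∀ w ∈ W,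
      θ w - θ (wb k) + (w - wb k) ⬝ᵥ F w ≥
        (1 / 2) * ((wk (k + 1) - w) ⬝ᵥ H.mulVec (wk (k + 1) - w)
          - (wk k - w) ⬝ᵥ H.mulVec (wk k - w)))
    (t : ℕ)
    (wt : n → ℝ) (hwt : wt = ((t : ℝ) + 1)⁻¹ • ∑ k ∈ Finset.range (t + 1), wb k) :
    ∀ w ∈ W,
      θ wt - θ w + (wt - w) ⬝ᵥ F w ≤
        (w - wk 0) ⬝ᵥ H.mulVec (w - wk 0) / (2 * ((t : ℝ) + 1)) := by
  intro w hw
  set s : ℝ := (t : ℝ) + 1 with hs_def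
  have hs : (0 : ℝ) < s := by positivity
  set q : (n → ℝ) → ℝ := fun v => (v - w) ⬝ᵥ H.mulVec (v - w) with hq_def
  -- telescoping sum of hkey
  have htel : ∑ k ∈ Finset.range (t + 1), (q (wk (k + 1)) - q (wk k))
      = q (wk (t + 1)) - q (wk 0) := Finset.sum_range_sub (fun k => q (wk k)) (t + 1)
  have hqnn : 0 ≤ q (wk (t + 1)) := by
    have := hH.dotProduct_mulVec_nonneg (wk (t + 1) - w)
    simpa [q] using this
  have hsum : ∑ k ∈ Finset.range (t + 1), (θ w - θ (wb k) + (w - wb k) ⬝ᵥ F w)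
      ≥ -(1 / 2) * q (wk 0) := by
    have h1 : ∑ k ∈ Finset.range (t + 1), (θ w - θ (wb k) + (w - wb k) ⬝ᵥ F w)
        ≥ ∑ k ∈ Finset.range (t + 1), (1 / 2) * (q (wk (k + 1)) - q (wk k)) :=
      Finset.sum_le_sum fun k _ => hkey k w hw
    have h2 : ∑ k ∈ Finset.range (t + 1), (1 / 2) * (q (wk (k + 1)) - q (wk k))
        = (1 / 2) * (q (wk (t + 1)) - q (wk 0)) := by
      rw [← Finset.mul_sum, htel]
    linarith [h1, h2 ▸ h1]
  -- expand the sum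
  have hconst : ∑ _k ∈ Finset.range (t + 1), θ w = s * θ w := by
    rw [Finset.sum_const, Finset.card_range, nsmul_eq_mul]
    congr 1
    push_cast [hs_def]; ring
  have hcast : s • w = (t + 1) • w := by
    rw [← Nat.cast_smul_eq_nsmul ℝ (t + 1) w]
    congr 1
    push_cast [hs_def]; ring
  have hvec : ∑ k ∈ Finset.range (t + 1), (w - wb k)
      = s • w - ∑ k ∈ Finset.range (t + 1), wb k := by
    rw [Finset.sum_sub_distrib, Finset.sum_const, Finset.card_range, hcast]
  have hdotsum : (∑ k ∈ Finset.range (t + 1), (w - wb k)) ⬝ᵥ F w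
      = ∑ k ∈ Finset.range (t + 1), (w - wb k) ⬝ᵥ F w := by
    simp only [dotProduct, Finset.sum_apply, Finset.sum_mul]
    rw [Finset.sum_comm]
  have hdotsum2 : ∑ k ∈ Finset.range (t + 1), (w - wb k) ⬝ᵥ F w
      = (s • w - ∑ k ∈ Finset.range (t + 1), wb k) ⬝ᵥ F w := by
    rw [← hdotsum, hvec]
  have hexp : ∑ k ∈ Finset.range (t + 1), (θ w - θ (wb k) + (w - wb k) ⬝ᵥ F w)
      = s * θ w - (∑ k ∈ Finset.range (t + 1), θ (wb k))
        + (s • w - ∑ k ∈ Finset.range (t + 1), wb k) ⬝ᵥ F w := by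
    rw [Finset.sum_add_distrib, Finset.sum_sub_distrib, hconst, hdotsum2]
  -- Jensen
  have hjensen : θ wt ≤ s⁻¹ * ∑ k ∈ Finset.range (t + 1), θ (wb k) := by
    have h := hθ.map_sum_le (t := Finset.range (t + 1)) (w := fun _ => s⁻¹)
      (p := fun k => wb k) (fun i _ => by positivity)
      (by simp only [Finset.sum_const, Finset.card_range, nsmul_eq_mul]; push_cast [hs_def]; exact mul_inv_cancel₀ (by positivity)) (fun i _ => hwb i)
    rw [hwt, Finset.smul_sum]
    calc θ (∑ k ∈ Finset.range (t + 1), s⁻¹ • wb k)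
        ≤ ∑ k ∈ Finset.range (t + 1), s⁻¹ * θ (wb k) := h
      _ = s⁻¹ * ∑ k ∈ Finset.range (t + 1), θ (wb k) := by rw [Finset.mul_sum]
  -- rewrite (wt - w) ⬝ᵥ F w
  have hdot : (wt - w) ⬝ᵥ F w
      = s⁻¹ * ((∑ k ∈ Finset.range (t + 1), wb k - s • w) ⬝ᵥ F w) := by
    have : wt - w = s⁻¹ • (∑ k ∈ Finset.range (t + 1), wb k - s • w) := by
      rw [hwt, smul_sub, smul_smul, inv_mul_cancel₀ hs.ne', one_smul]
    rw [this, smul_dotProduct, smul_eq_mul]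
  have hqsym : q (wk 0) = (w - wk 0) ⬝ᵥ H.mulVec (w - wk 0) := by
    show (wk 0 - w) ⬝ᵥ H.mulVec (wk 0 - w) = _
    rw [show wk 0 - w = -(w - wk 0) from (neg_sub w (wk 0)).symm,
      neg_dotProduct, mulVec_neg, dotProduct_neg, neg_neg]
  -- combine
  rw [hexp] at hsum
  have hkey2 : (∑ k ∈ Finset.range (t + 1), wb k - s • w) ⬝ᵥ F w
      + (∑ k ∈ Finset.range (t + 1), θ (wb k)) - s * θ w ≤ (1 / 2) * q (wk 0) := by
    have : (s • w - ∑ k ∈ Finset.range (t + 1), wb k) ⬝ᵥ F w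
        = -((∑ k ∈ Finset.range (t + 1), wb k - s • w) ⬝ᵥ F w) := by
      rw [← neg_dotProduct, neg_sub]
    rw [this] at hsum
    linarith
  have hfinal : θ wt - θ w + (wt - w) ⬝ᵥ F w ≤ q (wk 0) / (2 * s) := by
    rw [hdot]
    have h3 : s⁻¹ * ((∑ k ∈ Finset.range (t + 1), wb k - s • w) ⬝ᵥ F w
        + (∑ k ∈ Finset.range (t + 1), θ (wb k)) - s * θ w)
        ≤ s⁻¹ * ((1 / 2) * q (wk 0)) :=
      mul_le_mul_of_nonneg_left hkey2 (by positivity)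
    have h4 : s⁻¹ * (s * θ w) = θ w := by field_simp
    have h5 : s⁻¹ * ((1 / 2) * q (wk 0)) = q (wk 0) / (2 * s) := by
      rw [eq_div_iff (by positivity : (2 * s) ≠ 0)]
      field_simp
    have h6 : s⁻¹ * ((∑ k ∈ Finset.range (t + 1), wb k - s • w) ⬝ᵥ F w
        + (∑ k ∈ Finset.range (t + 1), θ (wb k)) - s * θ w)
        = s⁻¹ * ((∑ k ∈ Finset.range (t + 1), wb k - s • w) ⬝ᵥ F w)
          + s⁻¹ * (∑ k ∈ Finset.range (t + 1), θ (wb k)) - θ w := by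
      rw [mul_sub, mul_add, h4]
    rw [h6, h5] at h3
    linarith [hjensen, h3]
  rw [← hqsym]
  exact hfinal
end

section
/- Let θ_m: ℝ^{n_m} → ℝ be convex with subdifferential ∂θ_m, P_m symmetric positive semidefinite, and A_m ∈ ℝ^{ℓ×n_m}. If ξ ∈ ∂θ_m(x^{k+1}) satisfies (x − x^{k+1})ᵀ(ξ − A_mᵀ y^{k+1} + P_m(x^{k+1} − xᵏ)) ≥ 0 for all x ∈ X_m, and ζ ∈ ∂θ_m(xᵏ) satisfies (x − xᵏ)ᵀ(ζ − A_mᵀ yᵏ + P_m(xᵏ − x^{k−1})) ≥ 0 for all x ∈ X_m, then (xᵏ − x^{k+1})ᵀ A_mᵀ (yᵏ − y^{k+1}) ≥ ½‖xᵏ − x^{k+1}‖²_{P_m} − ½‖x^{k−1} − xᵏ‖²_{P_m}. -/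
open Matrix

theorem stmt16
    {nm ℓ : Type*} [Fintype nm] [Fintype ℓ]
    (θm : (nm → ℝ) → ℝ) (hθm : ConvexOn ℝ Set.univ θm)
    (Pm : Matrix nm nm ℝ) (hPm : Pm.PosSemidef)
    (A : Matrix ℓ nm ℝ)
    (Xm : Set (nm → ℝ)) (hXm : Convex ℝ Xm)
    (xkm1 xk xk1 : nm → ℝ) (hxkm1 : xkm1 ∈ Xm) (hxk : xk ∈ Xm) (hxk1 : xk1 ∈ Xm)
    (yk yk1 : ℓ → ℝ)
    (ξ ζ : nm → ℝ)
    (hξsub : ∀ z, θm z ≥ θm xk1 + (z - xk1) ⬝ᵥ ξ)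
    (hζsub : ∀ z, θm z ≥ θm xk + (z - xk) ⬝ᵥ ζ)
    (hξ : ∀ x ∈ Xm, (x - xk1) ⬝ᵥ (ξ - Aᵀ.mulVec yk1 + Pm.mulVec (xk1 - xk)) ≥ 0)
    (hζ : ∀ x ∈ Xm, (x - xk) ⬝ᵥ (ζ - Aᵀ.mulVec yk + Pm.mulVec (xk - xkm1)) ≥ 0) :
    (xk - xk1) ⬝ᵥ Aᵀ.mulVec (yk - yk1) ≥
      (1 / 2) * ((xk - xk1) ⬝ᵥ Pm.mulVec (xk - xk1))
      - (1 / 2) * ((xkm1 - xk) ⬝ᵥ Pm.mulVec (xkm1 - xk)) := by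
  have hsym : ∀ u v : nm → ℝ, u ⬝ᵥ Pm.mulVec v = v ⬝ᵥ Pm.mulVec u := by
    intro u v
    rw [Matrix.dotProduct_mulVec, ← Matrix.mulVec_transpose,
      show Pmᵀ = Pm from hPm.1, dotProduct_comm]
  have h1 := hξ xk hxk
  have h2 := hζ xk1 hxk1
  have h3 := hξsub xk
  have h4 := hζsub xk1
  have h5 := hPm.dotProduct_mulVec_nonneg ((xk - xk1) + (xk - xkm1))
  simp only [RCLike.star_def, star_trivial] at h5
  simp only [dotProduct_add, dotProduct_sub, add_dotProduct,
    sub_dotProduct, Matrix.mulVec_sub, Matrix.mulVec_add, ge_iff_le] at h1 h2 h3 h4 h5 ⊢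
  have e1 := hsym xk xk1
  have e2 := hsym xk xkm1
  have e3 := hsym xk1 xkm1
  have e4 := hsym xk1 xk
  linarith
end
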